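/- Let (M_k,Q_k)_{k≥1} be iid pairs of positive random variables with E[log M] < 0, P(Mr+Q=r) < 1 for all r ≥ 0, and let σ be an integrable stopping time for the sequence. Set X̂_σ = Σ_{k=1}^σ Π_{k-1} Q_k with Π_0 = 1, Π_n = M₁⋯M_n. If lim_{t→∞} t·P(log Q > t) = s ∈ [0,∞], then lim_{t→∞} t·P(log X̂_σ > t) = s·E[σ]. -/

import Mathlib

open MeasureTheory ProbabilityTheory Filter
open scoped ENNReal

section AUX
variable {Ω : Type*} [MeasureSpace Ω]

lemma aux_tail_zero (h : Ω → ℝ≥0∞) (hm : Measurable h)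
    (hfin : ∫⁻ ω, h ω ≠ ∞) :
    Tendsto (fun t : ℝ => ENNReal.ofReal t * ℙ {ω | ENNReal.ofReal t < h ω}) atTop (nhds 0) := by
  have hμ0 : Tendsto (fun t : ℝ => ℙ {ω | ENNReal.ofReal t < h ω}) atTop (nhds 0) := by
    have hb : ∀ᶠ t : ℝ in atTop, ℙ {ω | ENNReal.ofReal t < h ω}
        ≤ (∫⁻ ω, h ω) * (ENNReal.ofReal t)⁻¹ := by
      filter_upwards [eventually_gt_atTop (0:ℝ)] with t ht
      have hmar := mul_meas_ge_le_lintegral₀ (μ := (ℙ : Measure Ω)) hm.aemeasurable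
        (ENNReal.ofReal t)
      have hsub : ℙ {ω | ENNReal.ofReal t < h ω} ≤ ℙ {ω | ENNReal.ofReal t ≤ h ω} := by
        refine measure_mono (fun ω hω => ?_)
        simp only [Set.mem_setOf_eq] at hω ⊢
        exact hω.le
      have ht0 : ENNReal.ofReal t ≠ 0 := by
        simp [ENNReal.ofReal_eq_zero, not_le, ht]
      calc ℙ {ω | ENNReal.ofReal t < h ω} ≤ ℙ {ω | ENNReal.ofReal t ≤ h ω} := hsub
        _ = (ENNReal.ofReal t)⁻¹ * (ENNReal.ofReal t * ℙ {ω | ENNReal.ofReal t ≤ h ω}) := by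
            rw [← mul_assoc, ENNReal.inv_mul_cancel ht0 ENNReal.ofReal_ne_top, one_mul]
        _ ≤ (ENNReal.ofReal t)⁻¹ * ∫⁻ ω, h ω := by gcongr
        _ = (∫⁻ ω, h ω) * (ENNReal.ofReal t)⁻¹ := mul_comm _ _
    have hlim : Tendsto (fun t : ℝ => (∫⁻ ω, h ω) * (ENNReal.ofReal t)⁻¹) atTop (nhds 0) := by
      have : Tendsto (fun t : ℝ => (ENNReal.ofReal t)⁻¹) atTop (nhds (⊤ : ℝ≥0∞)⁻¹) :=
        ENNReal.tendsto_inv_iff.mpr ENNReal.tendsto_ofReal_atTop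
      simpa using ENNReal.Tendsto.const_mul this (Or.inr hfin)
    exact tendsto_of_tendsto_of_tendsto_of_le_of_le' tendsto_const_nhds hlim
      (Eventually.of_forall fun t => zero_le) hb
  have hset : Tendsto (fun t : ℝ => ∫⁻ ω in {ω | ENNReal.ofReal t < h ω}, h ω) atTop (nhds 0) :=
    tendsto_setLIntegral_zero hfin hμ0
  refine tendsto_of_tendsto_of_tendsto_of_le_of_le' tendsto_const_nhds hset
    (Eventually.of_forall fun t => zero_le) (Eventually.of_forall fun t => ?_)
  calc ENNReal.ofReal t * ℙ {ω | ENNReal.ofReal t < h ω}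
      = ∫⁻ _ω in {ω | ENNReal.ofReal t < h ω}, ENNReal.ofReal t := by
        rw [setLIntegral_const, mul_comm]
    _ ≤ ∫⁻ ω in {ω | ENNReal.ofReal t < h ω}, h ω :=
        setLIntegral_mono hm (fun ω hω => le_of_lt hω)

lemma aux_nat_lintegral (σ : Ω → ℕ) (hm : Measurable σ) :
    ∫⁻ ω, (σ ω : ℝ≥0∞) = ∑' k : ℕ, ℙ {ω | k + 1 ≤ σ ω} := by
  have hpt : ∀ ω, (σ ω : ℝ≥0∞)
      = ∑' k : ℕ, Set.indicator {ω' | k + 1 ≤ σ ω'} (fun _ => (1:ℝ≥0∞)) ω := by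
    intro ω
    have h1 : ∑' k : ℕ, Set.indicator {ω' | k + 1 ≤ σ ω'} (fun _ => (1:ℝ≥0∞)) ω
        = ∑ k ∈ Finset.range (σ ω), Set.indicator {ω' | k + 1 ≤ σ ω'} (fun _ => (1:ℝ≥0∞)) ω := by
      refine tsum_eq_sum (fun k hk => ?_)
      have hnot : ¬ (k + 1 ≤ σ ω) := by
        have := Finset.mem_range.not.mp hk
        omega
      exact Set.indicator_of_notMem (by simpa using hnot) _
    have h2 : ∀ k ∈ Finset.range (σ ω),
        Set.indicator {ω' | k + 1 ≤ σ ω'} (fun _ => (1:ℝ≥0∞)) ω = 1 := by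
      intro k hk
      have : ω ∈ {ω' | k + 1 ≤ σ ω'} := by
        simpa using Nat.succ_le_of_lt (Finset.mem_range.mp hk)
      simp [Set.indicator_of_mem this, Finset.mem_range.mp hk]
    rw [h1, Finset.sum_congr rfl h2, Finset.sum_const, Finset.card_range]
    simp
  calc ∫⁻ ω, (σ ω : ℝ≥0∞)
      = ∫⁻ ω, ∑' k : ℕ, Set.indicator {ω' | k + 1 ≤ σ ω'} (fun _ => (1:ℝ≥0∞)) ω := by
        exact lintegral_congr hpt
    _ = ∑' k : ℕ, ∫⁻ ω, Set.indicator {ω' | k + 1 ≤ σ ω'} (fun _ => (1:ℝ≥0∞)) ω := by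
        refine lintegral_tsum (fun k => ?_)
        exact (Measurable.indicator measurable_const (measurableSet_le measurable_const hm)
            ).aemeasurable
    _ = ∑' k : ℕ, ℙ {ω | k + 1 ≤ σ ω} := by
        refine tsum_congr (fun k => ?_)
        exact lintegral_indicator_one (measurableSet_le measurable_const hm)

lemma aux_bonferroni (A : ℕ → Set Ω)
    (hA : ∀ k, MeasurableSet (A k)) (n : ℕ) :
    ∑ k ∈ Finset.range n, ℙ (A k) ≤ ℙ (⋃ k ∈ Finset.range n, A k)
      + ∑ l ∈ Finset.range n, ∑ k ∈ Finset.range l, ℙ (A k ∩ A l) := by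
  induction n with
  | zero => simp
  | succ n ih =>
    rw [Finset.sum_range_succ, Finset.sum_range_succ (f := fun l => ∑ k ∈ Finset.range l, ℙ (A k ∩ A l))]
    have hU : (⋃ k ∈ Finset.range n, A k) ∪ A n = ⋃ k ∈ Finset.range (n+1), A k := by
      rw [Finset.range_add_one]
      simp [Set.biUnion_insert, Set.union_comm]
    have hkey : ℙ (⋃ k ∈ Finset.range n, A k) + ℙ (A n)
        ≤ ℙ (⋃ k ∈ Finset.range (n+1), A k) + ∑ k ∈ Finset.range n, ℙ (A k ∩ A n) := by
      rw [← measure_union_add_inter (⋃ k ∈ Finset.range n, A k) (hA n), hU]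
      gcongr
      have : (⋃ k ∈ Finset.range n, A k) ∩ A n = ⋃ k ∈ Finset.range n, (A k ∩ A n) := by
        simp [Set.iUnion_inter]
      rw [this]
      exact measure_biUnion_finset_le _ _
    calc ∑ k ∈ Finset.range n, ℙ (A k) + ℙ (A n)
        ≤ (ℙ (⋃ k ∈ Finset.range n, A k)
            + ∑ l ∈ Finset.range n, ∑ k ∈ Finset.range l, ℙ (A k ∩ A l)) + ℙ (A n) := by gcongr
      _ = (ℙ (⋃ k ∈ Finset.range n, A k) + ℙ (A n))
            + ∑ l ∈ Finset.range n, ∑ k ∈ Finset.range l, ℙ (A k ∩ A l) := by ring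
      _ ≤ (ℙ (⋃ k ∈ Finset.range (n+1), A k) + ∑ k ∈ Finset.range n, ℙ (A k ∩ A n))
            + ∑ l ∈ Finset.range n, ∑ k ∈ Finset.range l, ℙ (A k ∩ A l) := by gcongr
      _ = ℙ (⋃ k ∈ Finset.range (n+1), A k)
            + (∑ l ∈ Finset.range n, ∑ k ∈ Finset.range l, ℙ (A k ∩ A l)
              + ∑ k ∈ Finset.range n, ℙ (A k ∩ A n)) := by ring

/-- If eventually `f ≤ g + h`, `f → K ≠ ∞` and `h → 0`, then `K ≤ liminf g`. -/
lemma aux_le_liminf {α : Type*} {l : Filter α} [l.NeBot] {f g h : α → ℝ≥0∞} {K : ℝ≥0∞}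
    (hK : K ≠ ∞) (hfg : ∀ᶠ x in l, f x ≤ g x + h x)
    (hf : Tendsto f l (nhds K)) (hh : Tendsto h l (nhds 0)) : K ≤ liminf g l := by
  by_contra hcon
  push_neg at hcon
  obtain ⟨b, hb1, hb2⟩ := exists_between hcon
  obtain ⟨d, hd1, hd2⟩ := exists_between hb1
  have hbfin : b ≠ ∞ := (hb2.trans_le le_top).ne
  have hev1 : ∀ᶠ x in l, b < f x := hf.eventually_const_lt hb2
  have hev2 : ∀ᶠ x in l, h x < b - d := hh.eventually_lt_const (tsub_pos_of_lt hd2)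
  have hev : ∀ᶠ x in l, d < g x := by
    filter_upwards [hev1, hev2, hfg] with x h1 h2 h3
    by_contra hgx
    push_neg at hgx
    have hKtop : K < ⊤ := lt_top_iff_ne_top.mpr hK
    have hgxtop : g x ≠ ⊤ := (hgx.trans_lt (hd2.trans (hb2.trans hKtop))).ne
    have : f x < b := by
      calc f x ≤ g x + h x := h3
        _ < d + (b - d) := ENNReal.add_lt_add_of_le_of_lt hgxtop hgx h2
        _ = b := add_tsub_cancel_of_le hd2.le
    exact absurd h1 (not_lt.mpr this.le)
  have : d ≤ liminf g l := le_liminf_of_le (by isBoundedDefault) (hev.mono fun x hx => hx.le)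
  exact absurd this (not_le.mpr hd1)

end AUX

theorem stmt_11 {Ω : Type*} [MeasureSpace Ω] [IsProbabilityMeasure (ℙ : Measure Ω)]
    (M Q : ℕ → Ω → ℝ) (hsm : ∀ n, StronglyMeasurable (fun ω => (M n ω, Q n ω)))
    (hindep : iIndepFun (fun n ω => (M n ω, Q n ω)) ℙ)
    (hident : ∀ n, IdentDistrib (fun ω => (M n ω, Q n ω)) (fun ω => (M 1 ω, Q 1 ω)) ℙ ℙ)
    (hMpos : ∀ n ω, 0 < M n ω) (hQpos : ∀ n ω, 0 < Q n ω)
    (hlogMint : Integrable (fun ω => Real.log (M 1 ω)))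
    (hdrift : ∫ ω, Real.log (M 1 ω) < 0)
    (hnondeg : ∀ r : ℝ, 0 ≤ r → ℙ {ω | M 1 ω * r + Q 1 ω = r} < 1)
    (σ : Ω → ℕ) (hσ : IsStoppingTime (Filtration.natural (fun n ω => (M n ω, Q n ω)) hsm) (fun ω => (σ ω : WithTop ℕ)))
    (hσ1 : ∀ ω, 1 ≤ σ ω) (hσint : Integrable (fun ω => (σ ω : ℝ)))
    (Xhat : Ω → ℝ)
    (hXhat : ∀ ω, Xhat ω = ∑ k ∈ Finset.Icc 1 (σ ω), (∏ j ∈ Finset.Icc 1 (k - 1), M j ω) * Q k ω)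
    (s : ℝ≥0∞)
    (htail : Tendsto (fun t : ℝ => ENNReal.ofReal t * ℙ {ω | t < Real.log (Q 1 ω)})
      atTop (nhds s)) :
    Tendsto (fun t : ℝ => ENNReal.ofReal t * ℙ {ω | t < Real.log (Xhat ω)})
      atTop (nhds (s * ENNReal.ofReal (∫ ω, (σ ω : ℝ)))) := by
  classical
  have hMm : ∀ n, Measurable (M n) := fun n => (hsm n).measurable.fst
  have hQm : ∀ n, Measurable (Q n) := fun n => (hsm n).measurable.snd
  set ℱ := Filtration.natural (fun n ω => (M n ω, Q n ω)) hsm with hℱ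
  -- σ is measurable
  have hσm : Measurable σ := by
    refine measurable_to_countable' (fun n => ?_)
    have h1 : MeasurableSet[ℱ n] {ω | σ ω = n} := by simpa using hσ.measurableSet_eq_of_countable n
    exact (ℱ.le n) _ h1
  -- the event σ ≥ k+1 is ℱ k-measurable
  have hsig : ∀ k : ℕ, MeasurableSet[ℱ k] {ω | k + 1 ≤ σ ω} := by
    intro k
    have h1 : MeasurableSet[ℱ k] {ω | σ ω ≤ k}ᶜ := by simpa using (hσ k).compl
    have h2 : {ω | k + 1 ≤ σ ω} = {ω | σ ω ≤ k}ᶜ := by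
      ext ω
      simp only [Set.mem_setOf_eq, Set.mem_compl_iff, not_le]
      omega
    rw [h2]; exact h1
  have hsigAmb : ∀ k, MeasurableSet {ω | k + 1 ≤ σ ω} := fun k => (ℱ.le k) _ (hsig k)
  -- independence of ℱ k and the (k+1)-st coordinate
  have hIndepF : ∀ k : ℕ, Indep (ℱ k)
      (MeasurableSpace.comap (fun ω => (M (k+1) ω, Q (k+1) ω)) inferInstance) ℙ := by
    intro k
    have hle : ∀ n, MeasurableSpace.comap (fun ω => (M n ω, Q n ω))
        (inferInstance : MeasurableSpace (ℝ × ℝ)) ≤ _ := fun n => (hsm n).measurable.comap_le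
    have hbig := indep_biSup_compl hle hindep.iIndep (Set.Iic k)
    refine indep_of_indep_of_le_left (indep_of_indep_of_le_right hbig ?_) ?_
    · refine le_biSup (fun n => MeasurableSpace.comap (fun ω => (M n ω, Q n ω))
        (inferInstance : MeasurableSpace (ℝ × ℝ))) (show (k+1) ∈ (Set.Iic k)ᶜ from ?_)
      simp only [Set.mem_compl_iff, Set.mem_Iic]
      omega
    · refine iSup₂_le fun j hj => ?_
      exact le_biSup (fun n => MeasurableSpace.comap (fun ω => (M n ω, Q n ω))
        (inferInstance : MeasurableSpace (ℝ × ℝ))) (Set.mem_Iic.mpr hj)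
  -- tail function of log Q
  set p : ℝ → ℝ≥0∞ := fun u => ℙ {ω | u < Real.log (Q 1 ω)} with hp
  have hpk : ∀ (k : ℕ) (u : ℝ), ℙ {ω | u < Real.log (Q k ω)} = p u := by
    intro k u
    have hid : IdentDistrib (fun ω => Real.log (Q k ω)) (fun ω => Real.log (Q 1 ω)) ℙ ℙ :=
      (hident k).comp (Real.measurable_log.comp measurable_snd)
    have := hid.measure_mem_eq (s := Set.Ioi u) measurableSet_Ioi
    simpa [Set.preimage, Set.mem_Ioi] using this
  -- events B
  set B : ℕ → ℝ → Set Ω := fun k u => {ω | u < Real.log (Q k ω)} with hB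
  have hBmeas : ∀ k u, MeasurableSet (B k u) := fun k u =>
    measurableSet_lt measurable_const (Real.measurable_log.comp (hQm k))
  have hBcomap : ∀ k u, MeasurableSet[MeasurableSpace.comap
      (fun ω => (M k ω, Q k ω)) inferInstance] (B k u) := by
    intro k u
    exact ⟨{q : ℝ × ℝ | u < Real.log q.2},
      measurableSet_lt measurable_const (Real.measurable_log.comp measurable_snd), rfl⟩
  have hAk : ∀ (k : ℕ) (u : ℝ), ℙ ({ω | k + 1 ≤ σ ω} ∩ B (k+1) u)
      = ℙ {ω | k + 1 ≤ σ ω} * p u := by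
    intro k u
    have h := ((Indep_iff _ _ _).mp (hIndepF k)) _ _ (hsig k) (hBcomap (k+1) u)
    rw [h, hpk (k+1) u]
  have hBpair : ∀ (k l : ℕ) (u : ℝ), k ≠ l → ℙ (B k u ∩ B l u) = p u * p u := by
    intro k l u hkl
    have hIF : IndepFun (fun ω => (M k ω, Q k ω)) (fun ω => (M l ω, Q l ω)) ℙ :=
      hindep.indepFun hkl
    have h := hIF.meas_inter (s := B k u) (t := B l u) (hBcomap k u) (hBcomap l u)
    rw [h, hpk k u, hpk l u]
  -- expected value of σ in ℝ≥0∞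
  set σE : ℝ≥0∞ := ∑' k : ℕ, ℙ {ω | k + 1 ≤ σ ω} with hσE
  have hLeq : ∫⁻ ω, (σ ω : ℝ≥0∞) = σE := aux_nat_lintegral σ hσm
  have hLofReal : ENNReal.ofReal (∫ ω, (σ ω : ℝ)) = σE := by
    rw [ofReal_integral_eq_lintegral_ofReal hσint
      (Eventually.of_forall fun ω => by positivity)]
    rw [← hLeq]
    exact lintegral_congr fun ω => by simp
  have hLfin : σE ≠ ∞ := by rw [← hLofReal]; exact ENNReal.ofReal_ne_top
  have hL1 : 1 ≤ σE := by
    have h0 : {ω | 0 + 1 ≤ σ ω} = Set.univ := by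
      ext ω; simpa using hσ1 ω
    calc (1:ℝ≥0∞) = ℙ {ω | 0 + 1 ≤ σ ω} := by rw [h0]; simp
      _ ≤ σE := ENNReal.le_tsum 0
  -- running maximum event
  set G : ℝ → Set Ω := fun u => ⋃ k : ℕ, ({ω | k + 1 ≤ σ ω} ∩ B (k+1) u) with hG
  have hGle : ∀ u, ℙ (G u) ≤ σE * p u := by
    intro u
    calc ℙ (G u) ≤ ∑' k : ℕ, ℙ ({ω | k + 1 ≤ σ ω} ∩ B (k+1) u) := measure_iUnion_le _
      _ = ∑' k : ℕ, ℙ {ω | k + 1 ≤ σ ω} * p u := tsum_congr fun k => hAk k u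
      _ = σE * p u := ENNReal.tsum_mul_right
  set aN : ℕ → ℝ≥0∞ := fun N => ∑ k ∈ Finset.range N, ℙ {ω | k + 1 ≤ σ ω} with haNdef
  have haN : Tendsto aN atTop (nhds σE) := ENNReal.tendsto_nat_tsum _
  have haNle : ∀ N, aN N ≤ σE := fun N => ENNReal.sum_le_tsum _
  have hGge : ∀ (N : ℕ) (u : ℝ), aN N * p u
      ≤ ℙ (G u) + (N:ℝ≥0∞) * (N:ℝ≥0∞) * (p u * p u) := by
    intro N u
    have hbon := aux_bonferroni (fun k => {ω | k + 1 ≤ σ ω} ∩ B (k+1) u)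
      (fun k => (hsigAmb k).inter (hBmeas (k+1) u)) N
    have h1 : ∑ k ∈ Finset.range N, ℙ ({ω | k + 1 ≤ σ ω} ∩ B (k+1) u) = aN N * p u := by
      rw [Finset.sum_congr rfl fun k _ => hAk k u, ← Finset.sum_mul]
    have h2 : ℙ (⋃ k ∈ Finset.range N, ({ω | k + 1 ≤ σ ω} ∩ B (k+1) u)) ≤ ℙ (G u) := by
      refine measure_mono (Set.iUnion₂_subset fun k _ => ?_)
      exact Set.subset_iUnion (fun k => {ω | k + 1 ≤ σ ω} ∩ B (k+1) u) k
    have h3 : ∑ l ∈ Finset.range N, ∑ k ∈ Finset.range l,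
        ℙ (({ω | k + 1 ≤ σ ω} ∩ B (k+1) u) ∩ ({ω | l + 1 ≤ σ ω} ∩ B (l+1) u))
        ≤ (N:ℝ≥0∞) * (N:ℝ≥0∞) * (p u * p u) := by
      have hterm : ∀ l ∈ Finset.range N, ∑ k ∈ Finset.range l,
          ℙ (({ω | k + 1 ≤ σ ω} ∩ B (k+1) u) ∩ ({ω | l + 1 ≤ σ ω} ∩ B (l+1) u))
          ≤ (N:ℝ≥0∞) * (p u * p u) := by
        intro l hl
        calc ∑ k ∈ Finset.range l,
            ℙ (({ω | k + 1 ≤ σ ω} ∩ B (k+1) u) ∩ ({ω | l + 1 ≤ σ ω} ∩ B (l+1) u))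
            ≤ ∑ _k ∈ Finset.range l, (p u * p u) := by
              refine Finset.sum_le_sum fun k hk => ?_
              have hne : k + 1 ≠ l + 1 := by
                have := Finset.mem_range.mp hk; omega
              refine le_trans (measure_mono fun ω hω => ?_) (le_of_eq (hBpair _ _ u hne))
              exact ⟨hω.1.2, hω.2.2⟩
          _ = (l:ℝ≥0∞) * (p u * p u) := by
              rw [Finset.sum_const, Finset.card_range, nsmul_eq_mul]
          _ ≤ (N:ℝ≥0∞) * (p u * p u) := by
              gcongr
              exact_mod_cast (Finset.mem_range.mp hl).le
      calc ∑ l ∈ Finset.range N, ∑ k ∈ Finset.range l,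
          ℙ (({ω | k + 1 ≤ σ ω} ∩ B (k+1) u) ∩ ({ω | l + 1 ≤ σ ω} ∩ B (l+1) u))
          ≤ ∑ _l ∈ Finset.range N, (N:ℝ≥0∞) * (p u * p u) := Finset.sum_le_sum hterm
        _ = (N:ℝ≥0∞) * ((N:ℝ≥0∞) * (p u * p u)) := by
            rw [Finset.sum_const, Finset.card_range, nsmul_eq_mul]
        _ = (N:ℝ≥0∞) * (N:ℝ≥0∞) * (p u * p u) := by ring
    calc aN N * p u = ∑ k ∈ Finset.range N, ℙ ({ω | k + 1 ≤ σ ω} ∩ B (k+1) u) := h1.symm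
      _ ≤ ℙ (⋃ k ∈ Finset.range N, ({ω | k + 1 ≤ σ ω} ∩ B (k+1) u))
          + ∑ l ∈ Finset.range N, ∑ k ∈ Finset.range l,
            ℙ (({ω | k + 1 ≤ σ ω} ∩ B (k+1) u) ∩ ({ω | l + 1 ≤ σ ω} ∩ B (l+1) u)) := hbon
      _ ≤ ℙ (G u) + (N:ℝ≥0∞) * (N:ℝ≥0∞) * (p u * p u) := by gcongr
  -- stopped sum of |log M|
  set R : Ω → ℝ := fun ω => ∑ j ∈ Finset.Icc 1 (σ ω), |Real.log (M j ω)| with hR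
  set WW : Ω → ℝ≥0∞ := fun ω => ∑' j : ℕ, Set.indicator {ω' | j + 1 ≤ σ ω'}
      (fun ω' => ENNReal.ofReal |Real.log (M (j+1) ω')|) ω with hWW
  have hgm : ∀ j : ℕ, Measurable (fun ω => ENNReal.ofReal |Real.log (M j ω)|) := fun j =>
    ENNReal.measurable_ofReal.comp ((Real.measurable_log.comp (hMm j)).abs)
  have hWm : Measurable WW :=
    Measurable.ennreal_tsum fun j => Measurable.indicator (hgm (j+1)) (hsigAmb j)
  have hRW : ∀ ω, ENNReal.ofReal (R ω) ≤ WW ω := by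
    intro ω
    have h1 : ENNReal.ofReal (R ω)
        = ∑ j ∈ Finset.Icc 1 (σ ω), ENNReal.ofReal |Real.log (M j ω)| := by
      rw [hR]; exact ENNReal.ofReal_sum_of_nonneg (fun j _ => abs_nonneg _)
    have h2 : ∑ j ∈ Finset.Icc 1 (σ ω), ENNReal.ofReal |Real.log (M j ω)|
        = ∑ j ∈ Finset.range (σ ω), ENNReal.ofReal |Real.log (M (j+1) ω)| := by
      rw [← Finset.Ico_add_one_right_eq_Icc, Finset.sum_Ico_eq_sum_range]
      simp [add_comm]
    have h3 : ∑ j ∈ Finset.range (σ ω), ENNReal.ofReal |Real.log (M (j+1) ω)| ≤ WW ω := by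
      calc ∑ j ∈ Finset.range (σ ω), ENNReal.ofReal |Real.log (M (j+1) ω)|
          = ∑ j ∈ Finset.range (σ ω), Set.indicator {ω' | j + 1 ≤ σ ω'}
              (fun ω' => ENNReal.ofReal |Real.log (M (j+1) ω')|) ω := by
            refine Finset.sum_congr rfl fun j hj => ?_
            have hmem : ω ∈ {ω' | j + 1 ≤ σ ω'} := Nat.succ_le_of_lt (Finset.mem_range.mp hj)
            rw [Set.indicator_of_mem hmem]
        _ ≤ WW ω := ENNReal.sum_le_tsum _
    rw [h1, h2]; exact h3
  -- integrability of WW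
  have hcM : ∫⁻ ω, ENNReal.ofReal |Real.log (M 1 ω)| ≠ ∞ := by
    have h1 : ∫⁻ ω, ‖Real.log (M 1 ω)‖ₑ < ∞ := hlogMint.2
    have h2 : ∀ ω, ENNReal.ofReal |Real.log (M 1 ω)| = ‖Real.log (M 1 ω)‖ₑ :=
      fun ω => (Real.enorm_eq_ofReal_abs _).symm
    rw [lintegral_congr h2]
    exact h1.ne
  have hidM : ∀ k : ℕ, ∫⁻ ω, ENNReal.ofReal |Real.log (M k ω)|
      = ∫⁻ ω, ENNReal.ofReal |Real.log (M 1 ω)| := by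
    intro k
    have hid : IdentDistrib (fun ω => ENNReal.ofReal |Real.log (M k ω)|)
        (fun ω => ENNReal.ofReal |Real.log (M 1 ω)|) ℙ ℙ :=
      (hident k).comp (ENNReal.measurable_ofReal.comp
        ((Real.measurable_log.comp measurable_fst).abs))
    exact hid.lintegral_eq
  have hWint : ∫⁻ ω, WW ω ≠ ∞ := by
    have hterm : ∀ j : ℕ, ∫⁻ ω, Set.indicator {ω' | j + 1 ≤ σ ω'}
        (fun ω' => ENNReal.ofReal |Real.log (M (j+1) ω')|) ω
        = ℙ {ω | j + 1 ≤ σ ω} * ∫⁻ ω, ENNReal.ofReal |Real.log (M 1 ω)| := by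
      intro j
      set χ : Ω → ℝ≥0∞ := Set.indicator {ω' | j + 1 ≤ σ ω'} (1 : Ω → ℝ≥0∞) with hχ
      have hptwise : ∀ ω, Set.indicator {ω' | j + 1 ≤ σ ω'}
          (fun ω' => ENNReal.ofReal |Real.log (M (j+1) ω')|) ω
          = χ ω * ENNReal.ofReal |Real.log (M (j+1) ω)| := by
        intro ω
        by_cases hmem : ω ∈ {ω' | j + 1 ≤ σ ω'}
        · rw [hχ, Set.indicator_of_mem hmem, Set.indicator_of_mem hmem]; simp
        · rw [hχ, Set.indicator_of_notMem hmem, Set.indicator_of_notMem hmem]; simp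
      have hχm : Measurable χ := measurable_const.indicator (hsigAmb j)
      have hIF : IndepFun χ (fun ω => ENNReal.ofReal |Real.log (M (j+1) ω)|) ℙ := by
        rw [IndepFun_iff_Indep]
        refine indep_of_indep_of_le_right (indep_of_indep_of_le_left (hIndepF j) ?_) ?_
        · exact Measurable.comap_le (measurable_const.indicator (hsig j))
        · rintro t ⟨u, hu, rfl⟩
          exact ⟨(fun q : ℝ × ℝ => ENNReal.ofReal |Real.log q.1|) ⁻¹' u,
            (ENNReal.measurable_ofReal.comp
              ((Real.measurable_log.comp measurable_fst).abs)) hu, rfl⟩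
      calc ∫⁻ ω, Set.indicator {ω' | j + 1 ≤ σ ω'}
            (fun ω' => ENNReal.ofReal |Real.log (M (j+1) ω')|) ω
          = ∫⁻ ω, χ ω * ENNReal.ofReal |Real.log (M (j+1) ω)| := lintegral_congr hptwise
        _ = (∫⁻ ω, χ ω) * ∫⁻ ω, ENNReal.ofReal |Real.log (M (j+1) ω)| :=
            lintegral_mul_eq_lintegral_mul_lintegral_of_indepFun hχm (hgm (j+1)) hIF
        _ = ℙ {ω | j + 1 ≤ σ ω} * ∫⁻ ω, ENNReal.ofReal |Real.log (M 1 ω)| := by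
            rw [hχ, lintegral_indicator_one (hsigAmb j), hidM (j+1)]
    rw [hWW, lintegral_tsum (fun j => (Measurable.indicator (hgm (j+1)) (hsigAmb j)).aemeasurable)]
    rw [tsum_congr hterm, ENNReal.tsum_mul_right]
    exact ENNReal.mul_ne_top hLfin hcM
  -- tail of R is negligible at Cauchy scale
  have hWtail : ∀ ε : ℝ, 0 < ε → Tendsto
      (fun t : ℝ => ENNReal.ofReal t * ℙ {ω | ε * t < R ω}) atTop (nhds 0) := by
    intro ε hε
    have hcomp : Tendsto (fun t : ℝ => ENNReal.ofReal (ε * t)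
        * ℙ {ω | ENNReal.ofReal (ε * t) < WW ω}) atTop (nhds 0) :=
      (aux_tail_zero WW hWm hWint).comp (Tendsto.const_mul_atTop hε tendsto_id)
    have hlim0 : Tendsto (fun t : ℝ => ENNReal.ofReal (1/ε) * (ENNReal.ofReal (ε * t)
        * ℙ {ω | ENNReal.ofReal (ε * t) < WW ω})) atTop (nhds 0) := by
      simpa using ENNReal.Tendsto.const_mul hcomp (Or.inr ENNReal.ofReal_ne_top)
    refine tendsto_of_tendsto_of_tendsto_of_le_of_le' tendsto_const_nhds hlim0
      (Eventually.of_forall fun t => zero_le) ?_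
    filter_upwards [eventually_ge_atTop (0:ℝ)] with t ht
    have hsub : ℙ {ω | ε * t < R ω} ≤ ℙ {ω | ENNReal.ofReal (ε * t) < WW ω} := by
      refine measure_mono fun ω hω => ?_
      simp only [Set.mem_setOf_eq] at hω ⊢
      exact lt_of_lt_of_le ((ENNReal.ofReal_lt_ofReal_iff_of_nonneg (by positivity)).mpr hω)
        (hRW ω)
    calc ENNReal.ofReal t * ℙ {ω | ε * t < R ω}
        ≤ ENNReal.ofReal t * ℙ {ω | ENNReal.ofReal (ε * t) < WW ω} := by gcongr
      _ = ENNReal.ofReal (1/ε) * (ENNReal.ofReal (ε * t)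
          * ℙ {ω | ENNReal.ofReal (ε * t) < WW ω}) := by
          rw [← mul_assoc, ← ENNReal.ofReal_mul (by positivity)]
          congr 2
          field_simp
  -- tail of σ is negligible at Cauchy scale
  have hσtail : ∀ ε : ℝ, 0 < ε → Tendsto
      (fun t : ℝ => ENNReal.ofReal t * ℙ {ω | Real.exp (ε * t) < (σ ω : ℝ)}) atTop (nhds 0) := by
    intro ε hε
    have hσ'm : Measurable (fun ω => (σ ω : ℝ≥0∞)) := (measurable_of_countable _).comp hσm
    have hmar : ∀ t : ℝ, ℙ {ω | Real.exp (ε * t) < (σ ω : ℝ)}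
        ≤ σE * (ENNReal.ofReal (Real.exp (ε * t)))⁻¹ := by
      intro t
      set x : ℝ≥0∞ := ENNReal.ofReal (Real.exp (ε * t)) with hx
      have hx0 : x ≠ 0 := by
        rw [hx]; simp [ENNReal.ofReal_eq_zero, not_le, Real.exp_pos]
      have h1 : ℙ {ω | Real.exp (ε * t) < (σ ω : ℝ)} ≤ ℙ {ω | x ≤ (σ ω : ℝ≥0∞)} := by
        refine measure_mono fun ω hω => ?_
        simp only [Set.mem_setOf_eq] at hω ⊢
        calc x ≤ ENNReal.ofReal ((σ ω : ℝ)) := by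
              rw [hx]; exact ENNReal.ofReal_le_ofReal hω.le
          _ = (σ ω : ℝ≥0∞) := by simp
      have h2 : x * ℙ {ω | x ≤ (σ ω : ℝ≥0∞)} ≤ σE := by
        rw [← hLeq]
        exact mul_meas_ge_le_lintegral₀ hσ'm.aemeasurable x
      calc ℙ {ω | Real.exp (ε * t) < (σ ω : ℝ)} ≤ ℙ {ω | x ≤ (σ ω : ℝ≥0∞)} := h1
        _ = x⁻¹ * (x * ℙ {ω | x ≤ (σ ω : ℝ≥0∞)}) := by
            rw [← mul_assoc, ENNReal.inv_mul_cancel hx0 ENNReal.ofReal_ne_top, one_mul]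
        _ ≤ x⁻¹ * σE := by gcongr
        _ = σE * x⁻¹ := mul_comm _ _
    have hlim : Tendsto (fun t : ℝ => ENNReal.ofReal (t * Real.exp (-(ε * t))) * σE)
        atTop (nhds 0) := by
      have hreal : Tendsto (fun t : ℝ => t * Real.exp (-(ε * t))) atTop (nhds 0) := by
        have h1 : Tendsto (fun t : ℝ => (ε * t) * Real.exp (-(ε * t))) atTop (nhds 0) := by
          have h0 := Real.tendsto_pow_mul_exp_neg_atTop_nhds_zero 1
          have := h0.comp (Tendsto.const_mul_atTop hε (tendsto_id (α := ℝ)))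
          simpa [Function.comp_def] using this
        have h2 := h1.const_mul (1/ε)
        rw [mul_zero] at h2
        refine h2.congr fun t => ?_
        field_simp
      have := ENNReal.tendsto_ofReal hreal
      rw [ENNReal.ofReal_zero] at this
      simpa using ENNReal.Tendsto.mul_const this (Or.inr hLfin)
    refine tendsto_of_tendsto_of_tendsto_of_le_of_le' tendsto_const_nhds hlim
      (Eventually.of_forall fun t => zero_le) ?_
    filter_upwards [eventually_ge_atTop (0:ℝ)] with t ht
    calc ENNReal.ofReal t * ℙ {ω | Real.exp (ε * t) < (σ ω : ℝ)}
        ≤ ENNReal.ofReal t * (σE * (ENNReal.ofReal (Real.exp (ε * t)))⁻¹) := by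
          gcongr
          exact hmar t
      _ = (ENNReal.ofReal t * (ENNReal.ofReal (Real.exp (ε * t)))⁻¹) * σE := by ring
      _ = ENNReal.ofReal (t * Real.exp (-(ε * t))) * σE := by
          rw [ENNReal.ofReal_mul ht, Real.exp_neg, ENNReal.ofReal_inv_of_pos (Real.exp_pos _)]
  -- product of M's is controlled by exp(±R)
  have hprod : ∀ ω, ∀ k ∈ Finset.Icc 1 (σ ω),
      Real.exp (-(R ω)) ≤ (∏ j ∈ Finset.Icc 1 (k - 1), M j ω) ∧
      (∏ j ∈ Finset.Icc 1 (k - 1), M j ω) ≤ Real.exp (R ω) := by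
    intro ω k hk
    obtain ⟨hk1, hk2⟩ := Finset.mem_Icc.mp hk
    have hprodexp : (∏ j ∈ Finset.Icc 1 (k - 1), M j ω)
        = Real.exp (∑ j ∈ Finset.Icc 1 (k - 1), Real.log (M j ω)) := by
      rw [Real.exp_sum]
      exact Finset.prod_congr rfl fun j _ => (Real.exp_log (hMpos j ω)).symm
    have habs : |∑ j ∈ Finset.Icc 1 (k - 1), Real.log (M j ω)| ≤ R ω := by
      calc |∑ j ∈ Finset.Icc 1 (k - 1), Real.log (M j ω)|
          ≤ ∑ j ∈ Finset.Icc 1 (k - 1), |Real.log (M j ω)| := Finset.abs_sum_le_sum_abs _ _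
        _ ≤ ∑ j ∈ Finset.Icc 1 (σ ω), |Real.log (M j ω)| := by
            refine Finset.sum_le_sum_of_subset_of_nonneg
              (Finset.Icc_subset_Icc_right (by omega)) (fun j _ _ => abs_nonneg _)
        _ = R ω := by rw [hR]
    obtain ⟨ha1, ha2⟩ := abs_le.mp habs
    constructor
    · rw [hprodexp]; exact Real.exp_le_exp.mpr ha1
    · rw [hprodexp]; exact Real.exp_le_exp.mpr ha2
  -- upper inclusion
  have hincl_up : ∀ ε : ℝ, 0 < ε → ∀ t : ℝ, 0 < t →
      {ω | t < Real.log (Xhat ω)} ⊆ ({ω | Real.exp (ε * t) < (σ ω : ℝ)}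
        ∪ {ω | ε * t < R ω}) ∪ G ((1 - 2*ε) * t) := by
    intro ε hε t ht ω hω
    simp only [Set.mem_union, Set.mem_setOf_eq] at hω ⊢
    by_cases h1 : Real.exp (ε * t) < (σ ω : ℝ)
    · exact Or.inl (Or.inl h1)
    by_cases h2 : ε * t < R ω
    · exact Or.inl (Or.inr h2)
    right
    push_neg at h1 h2
    have hne : (Finset.Icc 1 (σ ω)).Nonempty := ⟨1, Finset.mem_Icc.mpr ⟨le_refl 1, hσ1 ω⟩⟩
    have hXpos : 0 < Xhat ω := by
      rw [hXhat ω]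
      refine Finset.sum_pos (fun k _ => ?_) hne
      exact mul_pos (Finset.prod_pos fun j _ => hMpos j ω) (hQpos k ω)
    obtain ⟨k₀, hk₀mem, hk₀max⟩ := Finset.exists_max_image (Finset.Icc 1 (σ ω))
      (fun k => Q k ω) hne
    obtain ⟨hk₀1, hk₀2⟩ := Finset.mem_Icc.mp hk₀mem
    have hXle : Xhat ω ≤ (σ ω : ℝ) * (Real.exp (R ω) * Q k₀ ω) := by
      rw [hXhat ω]
      calc ∑ k ∈ Finset.Icc 1 (σ ω), (∏ j ∈ Finset.Icc 1 (k - 1), M j ω) * Q k ω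
          ≤ ∑ _k ∈ Finset.Icc 1 (σ ω), Real.exp (R ω) * Q k₀ ω := by
            refine Finset.sum_le_sum fun k hk => ?_
            exact mul_le_mul ((hprod ω k hk).2) (hk₀max k hk) (hQpos k ω).le
              (Real.exp_nonneg _)
        _ = ((σ ω : ℝ)) * (Real.exp (R ω) * Q k₀ ω) := by
            rw [Finset.sum_const, Nat.card_Icc, nsmul_eq_mul, Nat.add_sub_cancel]
    have hexpt : Real.exp t < Xhat ω := (Real.lt_log_iff_exp_lt hXpos).mp hω
    have hQk₀ : Real.exp ((1 - 2*ε) * t) < Q k₀ ω := by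
      have hkey : Real.exp (ε * t) * (Real.exp (ε * t) * Real.exp ((1 - 2*ε) * t))
          = Real.exp t := by
        rw [← Real.exp_add, ← Real.exp_add]
        congr 1
        ring
      have hchain : Real.exp t < Real.exp (ε * t) * (Real.exp (ε * t) * Q k₀ ω) := by
        have hQk₀pos := hQpos k₀ ω
        have hexpR : Real.exp (R ω) ≤ Real.exp (ε * t) := Real.exp_le_exp.mpr h2
        have hσpos : (0:ℝ) < (σ ω : ℝ) := by
          have := hσ1 ω; positivity
        calc Real.exp t < Xhat ω := hexpt
          _ ≤ (σ ω : ℝ) * (Real.exp (R ω) * Q k₀ ω) := hXle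
          _ ≤ Real.exp (ε * t) * (Real.exp (ε * t) * Q k₀ ω) := by
              refine mul_le_mul h1 ?_ (by positivity) (Real.exp_nonneg _)
              exact mul_le_mul_of_nonneg_right hexpR hQk₀pos.le
      have := hkey ▸ hchain
      have h4 := lt_of_mul_lt_mul_left this (Real.exp_nonneg (ε * t))
      exact lt_of_mul_lt_mul_left h4 (Real.exp_nonneg (ε * t))
    refine Set.mem_iUnion.mpr ⟨k₀ - 1, ?_⟩
    constructor
    · show k₀ - 1 + 1 ≤ σ ω
      omega
    · show (1 - 2*ε) * t < Real.log (Q (k₀ - 1 + 1) ω)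
      have hkk : k₀ - 1 + 1 = k₀ := by omega
      rw [hkk]
      exact (Real.lt_log_iff_exp_lt (hQpos k₀ ω)).mpr hQk₀
  -- lower inclusion
  have hincl_lo : ∀ ε : ℝ, 0 < ε → ∀ t : ℝ, 0 < t →
      G ((1 + ε) * t) ⊆ {ω | t < Real.log (Xhat ω)} ∪ {ω | ε * t < R ω} := by
    intro ε hε t ht ω hω
    rcases Set.mem_iUnion.mp hω with ⟨k, hk⟩
    obtain ⟨hk1, hk2⟩ := hk
    simp only [Set.mem_setOf_eq] at hk1 hk2
    by_cases hRbig : ε * t < R ω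
    · exact Or.inr hRbig
    left
    push_neg at hRbig
    show t < Real.log (Xhat ω)
    have hkmem : k + 1 ∈ Finset.Icc 1 (σ ω) := Finset.mem_Icc.mpr ⟨by omega, hk1⟩
    have hsum : (∏ j ∈ Finset.Icc 1 (k + 1 - 1), M j ω) * Q (k+1) ω ≤ Xhat ω := by
      rw [hXhat ω]
      refine Finset.single_le_sum (f := fun k => (∏ j ∈ Finset.Icc 1 (k - 1), M j ω) * Q k ω)
        (fun i _ => ?_) hkmem
      exact mul_nonneg (Finset.prod_nonneg fun j _ => (hMpos j ω).le) (hQpos i ω).le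
    have hexpQ : Real.exp ((1 + ε) * t) < Q (k+1) ω :=
      (Real.lt_log_iff_exp_lt (hQpos (k+1) ω)).mp hk2
    have hexpR : Real.exp (-(ε * t)) ≤ (∏ j ∈ Finset.Icc 1 (k + 1 - 1), M j ω) := by
      refine le_trans (Real.exp_le_exp.mpr (neg_le_neg hRbig)) ?_
      exact (hprod ω (k+1) hkmem).1
    have hlt : Real.exp t < Xhat ω := by
      have hkey : Real.exp t = Real.exp (-(ε * t)) * Real.exp ((1 + ε) * t) := by
        rw [← Real.exp_add]
        congr 1
        ring
      calc Real.exp t = Real.exp (-(ε * t)) * Real.exp ((1 + ε) * t) := hkey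
        _ < Real.exp (-(ε * t)) * Q (k+1) ω := by
            exact mul_lt_mul_of_pos_left hexpQ (Real.exp_pos _)
        _ ≤ (∏ j ∈ Finset.Icc 1 (k + 1 - 1), M j ω) * Q (k+1) ω :=
            mul_le_mul_of_nonneg_right hexpR (hQpos (k+1) ω).le
        _ ≤ Xhat ω := hsum
    have hXpos : 0 < Xhat ω := lt_trans (Real.exp_pos t) hlt
    exact (Real.lt_log_iff_exp_lt hXpos).mpr hlt
  -- Xhat dominates Q 1
  have hinclQ1 : ∀ t : ℝ, {ω | t < Real.log (Q 1 ω)} ⊆ {ω | t < Real.log (Xhat ω)} := by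
    intro t ω hω
    simp only [Set.mem_setOf_eq] at hω ⊢
    have hone : (1:ℕ) ∈ Finset.Icc 1 (σ ω) := Finset.mem_Icc.mpr ⟨le_refl 1, hσ1 ω⟩
    have hle : Q 1 ω ≤ Xhat ω := by
      rw [hXhat ω]
      have h := Finset.single_le_sum
        (f := fun k => (∏ j ∈ Finset.Icc 1 (k - 1), M j ω) * Q k ω)
        (fun i _ => mul_nonneg (Finset.prod_nonneg fun j _ => (hMpos j ω).le) (hQpos i ω).le)
        hone
      simpa using h
    exact lt_of_lt_of_le hω (Real.log_le_log (hQpos 1 ω) hle)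
  -- target constant
  have hconst : s * ENNReal.ofReal (∫ ω, (σ ω : ℝ)) = σE * s := by
    rw [hLofReal, mul_comm]
  rcases eq_or_ne s ∞ with hstop | hs
  -- case s = ∞
  · have hσE0 : σE ≠ 0 := by
      intro h0
      rw [h0] at hL1
      exact absurd hL1 (by simp)
    have hgoal : s * ENNReal.ofReal (∫ ω, (σ ω : ℝ)) = ∞ := by
      rw [hconst, hstop, ENNReal.mul_top hσE0]
    rw [hgoal]
    refine tendsto_nhds_top_mono (hstop ▸ htail) ?_
    filter_upwards with t
    exact mul_le_mul_right (measure_mono (hinclQ1 t)) _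
  -- case s ≠ ∞
  have hfs : σE * s ≠ ∞ := ENNReal.mul_ne_top hLfin hs
  -- p tends to 0
  have hp0 : Tendsto p atTop (nhds 0) := by
    have hinv : Tendsto (fun u : ℝ => (ENNReal.ofReal u)⁻¹) atTop (nhds 0) := by
      have := ENNReal.tendsto_inv_iff.mpr ENNReal.tendsto_ofReal_atTop
      simpa using this
    have hmul : Tendsto (fun u : ℝ => (ENNReal.ofReal u)⁻¹ * (ENNReal.ofReal u * p u))
        atTop (nhds (0 * s)) :=
      ENNReal.Tendsto.mul hinv (Or.inr hs) htail (Or.inr (by simp))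
    rw [zero_mul] at hmul
    refine hmul.congr' ?_
    filter_upwards [eventually_gt_atTop (0:ℝ)] with u hu
    rw [← mul_assoc, ENNReal.inv_mul_cancel (ENNReal.ofReal_pos.mpr hu).ne'
      ENNReal.ofReal_ne_top, one_mul]
  -- core: the running-maximum event has the right Cauchy-type tail
  have hgup : limsup (fun u : ℝ => ENNReal.ofReal u * ℙ (G u)) atTop ≤ σE * s := by
    have hb : ∀ u : ℝ, ENNReal.ofReal u * ℙ (G u) ≤ σE * (ENNReal.ofReal u * p u) := by
      intro u
      calc ENNReal.ofReal u * ℙ (G u) ≤ ENNReal.ofReal u * (σE * p u) := by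
            gcongr
            exact hGle u
        _ = σE * (ENNReal.ofReal u * p u) := by ring
    have hlim : Tendsto (fun u : ℝ => σE * (ENNReal.ofReal u * p u)) atTop (nhds (σE * s)) :=
      ENNReal.Tendsto.const_mul htail (Or.inr hLfin)
    calc limsup (fun u : ℝ => ENNReal.ofReal u * ℙ (G u)) atTop
        ≤ limsup (fun u : ℝ => σE * (ENNReal.ofReal u * p u)) atTop :=
          limsup_le_limsup (Eventually.of_forall hb)
      _ = σE * s := hlim.limsup_eq
  have hgdn : σE * s ≤ liminf (fun u : ℝ => ENNReal.ofReal u * ℙ (G u)) atTop := by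
    have hN : ∀ N : ℕ, aN N * s ≤ liminf (fun u : ℝ => ENNReal.ofReal u * ℙ (G u)) atTop := by
      intro N
      have haNfin : aN N ≠ ∞ := ((haNle N).trans_lt (lt_top_iff_ne_top.mpr hLfin)).ne
      have hLHS : Tendsto (fun u : ℝ => aN N * (ENNReal.ofReal u * p u)) atTop
          (nhds (aN N * s)) := ENNReal.Tendsto.const_mul htail (Or.inr haNfin)
      have hT : Tendsto (fun u : ℝ => (N:ℝ≥0∞) * (N:ℝ≥0∞) * (ENNReal.ofReal u * p u * p u))
          atTop (nhds 0) := by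
        have h1 : Tendsto (fun u : ℝ => ENNReal.ofReal u * p u * p u) atTop (nhds (s * 0)) :=
          ENNReal.Tendsto.mul htail (Or.inr (by simp)) hp0 (Or.inr hs)
        rw [mul_zero] at h1
        have h2 := ENNReal.Tendsto.const_mul h1
          (Or.inr (ENNReal.mul_ne_top (ENNReal.natCast_ne_top N) (ENNReal.natCast_ne_top N)))
        simpa using h2
      refine aux_le_liminf (ENNReal.mul_ne_top haNfin hs) ?_ hLHS hT
      refine Eventually.of_forall fun u => ?_
      calc aN N * (ENNReal.ofReal u * p u) = ENNReal.ofReal u * (aN N * p u) := by ring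
        _ ≤ ENNReal.ofReal u * (ℙ (G u) + (N:ℝ≥0∞) * (N:ℝ≥0∞) * (p u * p u)) := by
            gcongr
            exact hGge N u
        _ = ENNReal.ofReal u * ℙ (G u)
            + (N:ℝ≥0∞) * (N:ℝ≥0∞) * (ENNReal.ofReal u * p u * p u) := by ring
    have hσEs : Tendsto (fun N => aN N * s) atTop (nhds (σE * s)) :=
      ENNReal.Tendsto.mul_const haN (Or.inr hs)
    exact le_of_tendsto hσEs (Eventually.of_forall hN)
  have hg : Tendsto (fun u : ℝ => ENNReal.ofReal u * ℙ (G u)) atTop (nhds (σE * s)) :=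
    tendsto_of_le_liminf_of_limsup_le hgdn hgup
  -- limsup bound for the target
  have hflimsup : limsup (fun t : ℝ => ENNReal.ofReal t * ℙ {ω | t < Real.log (Xhat ω)})
      atTop ≤ σE * s := by
    refine ENNReal.le_of_forall_pos_le_add fun δ hδ _ => ?_
    set c : ℝ := (σE * s).toReal with hc
    have hc0 : 0 ≤ c := ENNReal.toReal_nonneg
    have hcs : σE * s = ENNReal.ofReal c := by rw [hc, ENNReal.ofReal_toReal hfs]
    set δ' : ℝ := (δ : ℝ) with hδ'
    have hδ'0 : 0 < δ' := hδ
    set ε : ℝ := min (1/4) (δ' / (2*c + 2*δ' + 1)) with hεdef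
    have hε : 0 < ε := lt_min (by norm_num) (by positivity)
    have hε4 : ε ≤ 1/4 := min_le_left _ _
    have hε2 : (0:ℝ) < 1 - 2*ε := by linarith
    have hb : ∀ᶠ t : ℝ in atTop, ENNReal.ofReal t * ℙ {ω | t < Real.log (Xhat ω)}
        ≤ (ENNReal.ofReal t * ℙ {ω | Real.exp (ε * t) < (σ ω : ℝ)}
            + ENNReal.ofReal t * ℙ {ω | ε * t < R ω})
          + ENNReal.ofReal (1/(1 - 2*ε))
            * (ENNReal.ofReal ((1 - 2*ε) * t) * ℙ (G ((1 - 2*ε) * t))) := by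
      filter_upwards [eventually_gt_atTop (0:ℝ)] with t ht
      have hP : ℙ {ω | t < Real.log (Xhat ω)}
          ≤ (ℙ {ω | Real.exp (ε * t) < (σ ω : ℝ)} + ℙ {ω | ε * t < R ω})
            + ℙ (G ((1 - 2*ε) * t)) := by
        calc ℙ {ω | t < Real.log (Xhat ω)}
            ≤ ℙ (({ω | Real.exp (ε * t) < (σ ω : ℝ)} ∪ {ω | ε * t < R ω})
              ∪ G ((1 - 2*ε) * t)) := measure_mono (hincl_up ε hε t ht)
          _ ≤ ℙ ({ω | Real.exp (ε * t) < (σ ω : ℝ)} ∪ {ω | ε * t < R ω})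
              + ℙ (G ((1 - 2*ε) * t)) := measure_union_le _ _
          _ ≤ (ℙ {ω | Real.exp (ε * t) < (σ ω : ℝ)} + ℙ {ω | ε * t < R ω})
              + ℙ (G ((1 - 2*ε) * t)) := by
              gcongr
              exact measure_union_le _ _
      have h3 : ENNReal.ofReal t * ℙ (G ((1 - 2*ε) * t))
          = ENNReal.ofReal (1/(1 - 2*ε))
            * (ENNReal.ofReal ((1 - 2*ε) * t) * ℙ (G ((1 - 2*ε) * t))) := by
        rw [← mul_assoc, ← ENNReal.ofReal_mul (by positivity)]
        congr 2
        field_simp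
      calc ENNReal.ofReal t * ℙ {ω | t < Real.log (Xhat ω)}
          ≤ ENNReal.ofReal t * ((ℙ {ω | Real.exp (ε * t) < (σ ω : ℝ)}
              + ℙ {ω | ε * t < R ω}) + ℙ (G ((1 - 2*ε) * t))) := by gcongr
        _ = (ENNReal.ofReal t * ℙ {ω | Real.exp (ε * t) < (σ ω : ℝ)}
              + ENNReal.ofReal t * ℙ {ω | ε * t < R ω})
            + ENNReal.ofReal t * ℙ (G ((1 - 2*ε) * t)) := by ring
        _ = (ENNReal.ofReal t * ℙ {ω | Real.exp (ε * t) < (σ ω : ℝ)}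
              + ENNReal.ofReal t * ℙ {ω | ε * t < R ω})
            + ENNReal.ofReal (1/(1 - 2*ε))
              * (ENNReal.ofReal ((1 - 2*ε) * t) * ℙ (G ((1 - 2*ε) * t))) := by rw [h3]
    have hRHS : Tendsto (fun t : ℝ => (ENNReal.ofReal t * ℙ {ω | Real.exp (ε * t) < (σ ω : ℝ)}
          + ENNReal.ofReal t * ℙ {ω | ε * t < R ω})
        + ENNReal.ofReal (1/(1 - 2*ε))
          * (ENNReal.ofReal ((1 - 2*ε) * t) * ℙ (G ((1 - 2*ε) * t)))) atTop
        (nhds ((0 + 0) + ENNReal.ofReal (1/(1 - 2*ε)) * (σE * s))) := by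
      refine Tendsto.add (Tendsto.add (hσtail ε hε) (hWtail ε hε)) ?_
      exact ENNReal.Tendsto.const_mul
        (hg.comp (Tendsto.const_mul_atTop hε2 tendsto_id)) (Or.inr ENNReal.ofReal_ne_top)
    have hlimsle := limsup_le_limsup hb
    rw [hRHS.limsup_eq] at hlimsle
    refine le_trans hlimsle ?_
    rw [zero_add, zero_add, hcs, ← ENNReal.ofReal_mul (by positivity)]
    have hcoe : (δ : ℝ≥0∞) = ENNReal.ofReal δ' := by
      rw [hδ', ENNReal.ofReal_coe_nnreal]
    rw [hcoe, ← ENNReal.ofReal_add hc0 hδ'0.le]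
    refine ENNReal.ofReal_le_ofReal ?_
    have hεle : ε ≤ δ' / (2*c + 2*δ' + 1) := min_le_right _ _
    have hX : (0:ℝ) < 2*c + 2*δ' + 1 := by positivity
    have h2e : ε * (2*c + 2*δ' + 1) ≤ δ' := (le_div_iff₀ hX).mp hεle
    rw [one_div, inv_mul_eq_div, div_le_iff₀ hε2]
    nlinarith [hε.le]
  -- liminf bound for the target
  have hKε : ∀ ε : ℝ, 0 < ε → ENNReal.ofReal (1/(1+ε)) * (σE * s)
      ≤ liminf (fun t : ℝ => ENNReal.ofReal t * ℙ {ω | t < Real.log (Xhat ω)}) atTop := by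
    intro ε hε
    have h1ε : (0:ℝ) < 1 + ε := by linarith
    refine aux_le_liminf (f := fun t : ℝ => ENNReal.ofReal (1/(1+ε))
        * (ENNReal.ofReal ((1+ε) * t) * ℙ (G ((1+ε) * t))))
      (h := fun t : ℝ => ENNReal.ofReal t * ℙ {ω | ε * t < R ω})
      (ENNReal.mul_ne_top ENNReal.ofReal_ne_top hfs) ?_ ?_ (hWtail ε hε)
    · filter_upwards [eventually_gt_atTop (0:ℝ)] with t ht
      have hP : ℙ (G ((1+ε) * t)) ≤ ℙ {ω | t < Real.log (Xhat ω)} + ℙ {ω | ε * t < R ω} :=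
        (measure_mono (hincl_lo ε hε t ht)).trans (measure_union_le _ _)
      have h0 : ENNReal.ofReal (1/(1+ε)) * (ENNReal.ofReal ((1+ε) * t) * ℙ (G ((1+ε) * t)))
          = ENNReal.ofReal t * ℙ (G ((1+ε) * t)) := by
        rw [← mul_assoc, ← ENNReal.ofReal_mul (by positivity)]
        congr 2
        field_simp
      calc ENNReal.ofReal (1/(1+ε)) * (ENNReal.ofReal ((1+ε) * t) * ℙ (G ((1+ε) * t)))
          = ENNReal.ofReal t * ℙ (G ((1+ε) * t)) := h0
        _ ≤ ENNReal.ofReal t * (ℙ {ω | t < Real.log (Xhat ω)} + ℙ {ω | ε * t < R ω}) := by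
            gcongr
        _ = ENNReal.ofReal t * ℙ {ω | t < Real.log (Xhat ω)}
            + ENNReal.ofReal t * ℙ {ω | ε * t < R ω} := by ring
    · exact ENNReal.Tendsto.const_mul
        (hg.comp (Tendsto.const_mul_atTop h1ε tendsto_id)) (Or.inr ENNReal.ofReal_ne_top)
  have hfliminf : σE * s
      ≤ liminf (fun t : ℝ => ENNReal.ofReal t * ℙ {ω | t < Real.log (Xhat ω)}) atTop := by
    have h0 : Tendsto (fun n : ℕ => 1/((n:ℝ)+1)) atTop (nhds 0) :=
      tendsto_one_div_add_atTop_nhds_zero_nat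
    have h1 : Tendsto (fun n : ℕ => 1 + 1/((n:ℝ)+1)) atTop (nhds 1) := by
      have := (tendsto_const_nhds (x := (1:ℝ)) (f := atTop (α := ℕ))).add h0
      simpa using this
    have hr : Tendsto (fun n : ℕ => 1/(1 + 1/((n:ℝ)+1))) atTop (nhds 1) := by
      have := h1.inv₀ (by norm_num)
      simpa [one_div] using this
    have hseq : Tendsto (fun n : ℕ => ENNReal.ofReal (1/(1 + 1/((n:ℝ)+1))) * (σE * s))
        atTop (nhds (σE * s)) := by
      have hofr := ENNReal.tendsto_ofReal hr
      have := ENNReal.Tendsto.mul_const hofr (Or.inr hfs)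
      simpa using this
    refine le_of_tendsto hseq (Eventually.of_forall fun n => hKε _ (by positivity))
  rw [hconst]
  exact tendsto_of_le_liminf_of_limsup_le hfliminf hflimsup
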